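/- Let p(τ), p̃(τ) be two smooth curves in a complete Riemannian manifold M with 0 < d(τ) = d_M(p(τ), p̃(τ)) < min{i₀, 1/√(2B₀)} for all τ, where i₀ is a lower bound on the injectivity radius and |R̄| ≤ B₀. Let γ_τ(s) = exp_{p(τ)}(s v_τ), s ∈ [0,1], be the unique minimizing geodesic from p(τ) to p̃(τ), and J the Jacobi field along γ_τ induced by variation in τ. Let P denote parallel transport along γ_τ from T_{p̃}M to T_pM. Then |∇̄_{γ̇} J| ≤ 2B₀ |∂_τ p| d² + 2 |P ∂_τ p̃ − ∂_τ p|. -/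
import Mathlib

open scoped RealInnerProductSpace


/-- Lemma 3.1 of the paper. Let `J` be the Jacobi field along the unique
minimizing geodesic `γ_τ` (of speed `|γ̇| = d`, with `0 < d < min{i₀, 1/√(2B₀)}` so that
`B₀ d² < 1/2`) joining two curves `p(τ)`, `p̃(τ)`, with `J(0) = ∂_τ p`, `J(1) = ∂_τ p̃`.
In a parallel orthonormal frame along `γ`, `J` is represented by a curve `f : [0,1] → E`
whose second derivative satisfies the Jacobi-equation bound `‖f''‖ ≤ B₀ d² ‖f‖` (since
`|R̄| ≤ B₀` and `|γ̇| = d`); moreover `P ∂_τ p̃ − ∂_τ p` is represented by `f 1 - f 0`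
(`P` being parallel transport along `γ`).  Then
`|∇̄_{γ̇} J| ≤ 2 B₀ |∂_τ p| d² + 2 |P ∂_τ p̃ − ∂_τ p|`. -/
theorem jacobi_field_derivative_bound
    {E : Type*} [NormedAddCommGroup E] [InnerProductSpace ℝ E]
    (B₀ d : ℝ) (hB₀ : 0 ≤ B₀) (hd : 0 < d) (hsmall : B₀ * d ^ 2 < 1 / 2)
    (f f' f'' : ℝ → E)
    (hf : ∀ s ∈ Set.Icc (0 : ℝ) 1, HasDerivAt f (f' s) s)
    (hf' : ∀ s ∈ Set.Icc (0 : ℝ) 1, HasDerivAt f' (f'' s) s)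
    (hJacobi : ∀ s ∈ Set.Icc (0 : ℝ) 1, ‖f'' s‖ ≤ B₀ * d ^ 2 * ‖f s‖) :
    ∀ s ∈ Set.Icc (0 : ℝ) 1,
      ‖f' s‖ ≤ 2 * B₀ * ‖f 0‖ * d ^ 2 + 2 * ‖f 1 - f 0‖ := by
  set K := B₀ * d ^ 2 with hKdef
  have hK0 : 0 ≤ K := by positivity
  have h0mem : (0:ℝ) ∈ Set.Icc (0:ℝ) 1 := by norm_num
  have h1mem : (1:ℝ) ∈ Set.Icc (0:ℝ) 1 := by norm_num
  have hcf' : ContinuousOn f' (Set.Icc 0 1) :=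
    fun s hs => (hf' s hs).continuousAt.continuousWithinAt
  obtain ⟨s₀, hs₀, hmax⟩ :=
    isCompact_Icc.exists_isMaxOn (Set.nonempty_Icc.2 (by norm_num)) hcf'.norm
  set A := ‖f' s₀‖ with hAdef
  have hA0 : 0 ≤ A := norm_nonneg _
  have hbound : ∀ s ∈ Set.Icc (0:ℝ) 1, ‖f' s‖ ≤ A := fun s hs => hmax hs
  -- bound on ‖f s‖
  have hfb : ∀ s ∈ Set.Icc (0:ℝ) 1, ‖f s‖ ≤ ‖f 0‖ + A := by
    intro s hs
    have hseg : ‖f s - f 0‖ ≤ A * ‖s - 0‖ :=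
      Convex.norm_image_sub_le_of_norm_hasDerivWithin_le
        (fun x hx => (hf x hx).hasDerivWithinAt) hbound (convex_Icc 0 1) h0mem hs
    have h1 : ‖f s‖ - ‖f 0‖ ≤ ‖f s - f 0‖ := norm_sub_norm_le _ _
    have hs1 : ‖s - 0‖ ≤ 1 := by
      rw [Real.norm_eq_abs]; rw [abs_le]; constructor <;> [linarith [hs.1]; linarith [hs.2]]
    nlinarith
  -- bound on ‖f'' s‖
  have hf''b : ∀ s ∈ Set.Icc (0:ℝ) 1, ‖f'' s‖ ≤ K * (‖f 0‖ + A) := by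
    intro s hs
    have := hJacobi s hs
    have := hfb s hs
    nlinarith
  -- key estimate: A ≤ D + K (‖f 0‖ + A)
  set D := ‖f 1 - f 0‖ with hDdef
  have hkey : A ≤ D + K * (‖f 0‖ + A) := by
    set v := f' s₀ with hv
    set g : ℝ → ℝ := fun s => ⟪f s, v⟫ with hg
    have hgd : ∀ s ∈ Set.Icc (0:ℝ) 1, HasDerivAt g (⟪f' s, v⟫) s := by
      intro s hs
      simpa using (hf s hs).inner ℝ (hasDerivAt_const s v)
    obtain ⟨c, hc, hceq⟩ := exists_hasDerivAt_eq_slope g (fun s => ⟪f' s, v⟫) one_pos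
      (fun s hs => (hgd s hs).continuousAt.continuousWithinAt)
      (fun s hs => hgd s (Set.mem_Icc_of_Ioo hs))
    have hcmem : c ∈ Set.Icc (0:ℝ) 1 := Set.mem_Icc_of_Ioo hc
    have hslope : ⟪f' c, v⟫ = ⟪f 1 - f 0, v⟫ := by
      rw [hceq]; simp [hg, inner_sub_left]
    have hdiff : ‖v - f' c‖ ≤ K * (‖f 0‖ + A) * ‖s₀ - c‖ := by
      have := Convex.norm_image_sub_le_of_norm_hasDerivWithin_le
        (fun x hx => (hf' x hx).hasDerivWithinAt) hf''b (convex_Icc 0 1) hcmem hs₀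
      simpa [hv] using this
    have hsc1 : ‖s₀ - c‖ ≤ 1 := by
      rw [Real.norm_eq_abs, abs_le]
      constructor <;> [linarith [hs₀.1, hcmem.2]; linarith [hs₀.2, hcmem.1]]
    have hdiff' : ‖v - f' c‖ ≤ K * (‖f 0‖ + A) := by
      have h0 : 0 ≤ K * (‖f 0‖ + A) := by positivity
      nlinarith
    have hsq : A ^ 2 = ⟪f 1 - f 0, v⟫ + ⟪v - f' c, v⟫ := by
      have : (A : ℝ) ^ 2 = ⟪v, v⟫ := by
        rw [real_inner_self_eq_norm_sq]
      rw [this, ← hslope, inner_sub_left]; ring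
    have hCS1 : ⟪f 1 - f 0, v⟫ ≤ D * A := by
      calc ⟪f 1 - f 0, v⟫ ≤ ‖f 1 - f 0‖ * ‖v‖ := real_inner_le_norm _ _
        _ = D * A := rfl
    have hCS2 : ⟪v - f' c, v⟫ ≤ K * (‖f 0‖ + A) * A := by
      calc ⟪v - f' c, v⟫ ≤ ‖v - f' c‖ * ‖v‖ := real_inner_le_norm _ _
        _ ≤ K * (‖f 0‖ + A) * A := by
            apply mul_le_mul_of_nonneg_right hdiff' hA0
    have hA2 : A ^ 2 ≤ (D + K * (‖f 0‖ + A)) * A := by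
      rw [hsq]; nlinarith
    rcases eq_or_lt_of_le hA0 with h | h
    · have hD0 : 0 ≤ D := norm_nonneg _
      have hf00 : (0:ℝ) ≤ ‖f 0‖ := norm_nonneg _
      nlinarith [mul_nonneg hK0 hf00]
    · exact le_of_mul_le_mul_right (by nlinarith) h
  intro s hs
  have := hbound s hs
  have hD0 : (0:ℝ) ≤ D := norm_nonneg _
  have hf00 : (0:ℝ) ≤ ‖f 0‖ := norm_nonneg _
  nlinarith [hkey]
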